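/- For every part V_j of a q-partition of G, it holds that √2 · relout(V_j) ≥ ‖(L − L̄) ū_j‖₂, where ‖·‖₂ is the Euclidean norm on ℝⁿ. -/

import Mathlib

open Matrix

/-- The weighted degree matrix of `A`. -/
noncomputable def degMat {n : ℕ} (A : Matrix (Fin n) (Fin n) ℝ) :
    Matrix (Fin n) (Fin n) ℝ :=
  Matrix.diagonal (fun k => ∑ l, A k l)

/-- The graph Laplacian `L = D - A`. -/
noncomputable def lap {n : ℕ} (A : Matrix (Fin n) (Fin n) ℝ) :
    Matrix (Fin n) (Fin n) ℝ :=
  degMat A - A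

/-- Adjacency matrix of the `q`-partitioned graph: entries of `A` within a part are
kept, entries between different parts are set to zero. -/
noncomputable def partAdj {n q : ℕ} (A : Matrix (Fin n) (Fin n) ℝ)
    (V : Fin q → Finset (Fin n)) : Matrix (Fin n) (Fin n) ℝ :=
  fun k l => if ∃ j : Fin q, k ∈ V j ∧ l ∈ V j then A k l else 0

/-- The unit vector that is uniform (`1/√|V j|`) on part `V j` and `0` elsewhere. -/
noncomputable def ubar {n q : ℕ} (V : Fin q → Finset (Fin n)) (j : Fin q) :
    Fin n → ℝ :=
  fun i => if i ∈ V j then (Real.sqrt ((V j).card))⁻¹ else 0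

/-- The relative outgoing weight of the part `V j`:
`relout(V_j) = (1/√|V_j|) ∑_{k∈V_j, l∉V_j} A_{kl}`. -/
noncomputable def relout {n q : ℕ} (A : Matrix (Fin n) (Fin n) ℝ)
    (V : Fin q → Finset (Fin n)) (j : Fin q) : ℝ :=
  (Real.sqrt ((V j).card))⁻¹ * ∑ k ∈ V j, ∑ l ∈ (V j)ᶜ, A k l

/-- `√2 · relout(V_j) ≥ ‖(L − L̄) ū_j‖₂` for every part of a q-partition. -/
theorem stmt_1 (n q : ℕ) (A : Matrix (Fin n) (Fin n) ℝ)
    (hsymm : ∀ k l, A k l = A l k)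
    (hnonneg : ∀ k l, 0 ≤ A k l)
    (hdiag : ∀ k, A k k = 0)
    (hq1 : 1 ≤ q) (hqn : q ≤ n - 1)
    (V : Fin q → Finset (Fin n))
    (hne : ∀ j, (V j).Nonempty)
    (hdisj : ∀ j j' : Fin q, j ≠ j' → Disjoint (V j) (V j'))
    (hcover : ∀ i : Fin n, ∃ j : Fin q, i ∈ V j)
    (j : Fin q) :
    Real.sqrt 2 * relout A V j
      ≥ Real.sqrt (∑ i, (((lap A - lap (partAdj A V)).mulVec (ubar V j)) i) ^ 2) := by

  classical
  set s : ℝ := (Real.sqrt ((V j).card))⁻¹ with hs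
  have hs0 : 0 ≤ s := inv_nonneg.2 (Real.sqrt_nonneg _)
  set R : ℝ := ∑ k ∈ V j, ∑ l ∈ (V j)ᶜ, A k l with hR
  have hR0 : 0 ≤ R :=
    Finset.sum_nonneg fun k _ => Finset.sum_nonneg fun l _ => hnonneg k l
  -- part adjacency facts
  have hpart0 : ∀ i l : Fin n, ((i ∈ V j ∧ l ∉ V j) ∨ (i ∉ V j ∧ l ∈ V j)) →
      partAdj A V i l = 0 := by
    intro i l h
    unfold partAdj
    rw [if_neg]
    rintro ⟨j', h1, h2⟩
    rcases h with ⟨hi, hl⟩ | ⟨hi, hl⟩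
    · rcases eq_or_ne j' j with rfl | hne'
      · exact hl h2
      · exact (Finset.disjoint_left.1 (hdisj j' j hne')) h1 hi
    · rcases eq_or_ne j' j with rfl | hne'
      · exact hi h1
      · exact (Finset.disjoint_left.1 (hdisj j' j hne')) h2 hl
  have hpartS : ∀ i l : Fin n, i ∈ V j → l ∈ V j → partAdj A V i l = A i l := by
    intro i l hi hl; unfold partAdj; rw [if_pos ⟨j, hi, hl⟩]
  -- entrywise formula
  have hent : ∀ i : Fin n,
      ((lap A - lap (partAdj A V)).mulVec (ubar V j)) i
        = if i ∈ V j then s * ∑ l ∈ (V j)ᶜ, A i l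
          else -(s * ∑ l ∈ V j, A i l) := by
    intro i
    have hM : ∀ l : Fin n, (lap A - lap (partAdj A V)) i l
        = (if i = l then (∑ t, A i t - ∑ t, partAdj A V i t) else 0)
          - (A i l - partAdj A V i l) := by
      intro l
      simp only [lap, degMat, Matrix.sub_apply, Matrix.diagonal_apply]
      split <;> ring
    have h1 : ((lap A - lap (partAdj A V)).mulVec (ubar V j)) i
        = ∑ l ∈ V j, (lap A - lap (partAdj A V)) i l * s := by
      simp only [Matrix.mulVec, dotProduct, ubar, mul_ite, mul_zero]
      rw [Finset.sum_ite_mem, Finset.univ_inter]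
    rw [h1]
    have h2 : ∑ l ∈ V j, (lap A - lap (partAdj A V)) i l * s
        = ((if i ∈ V j then (∑ t, A i t - ∑ t, partAdj A V i t) else 0)
            - ∑ l ∈ V j, (A i l - partAdj A V i l)) * s := by
      rw [← Finset.sum_mul]
      congr 1
      rw [Finset.sum_congr rfl fun l _ => hM l, Finset.sum_sub_distrib,
        Finset.sum_ite_eq]
    rw [h2]
    by_cases hi : i ∈ V j
    · rw [if_pos hi, if_pos hi]
      have hz : ∑ l ∈ V j, (A i l - partAdj A V i l) = 0 :=
        Finset.sum_eq_zero fun l hl => by rw [hpartS i l hi hl, sub_self]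
      have hd : ∑ t, A i t - ∑ t, partAdj A V i t = ∑ l ∈ (V j)ᶜ, A i l := by
        rw [← Finset.sum_sub_distrib, ← Finset.sum_add_sum_compl (V j)
          (fun t => A i t - partAdj A V i t), hz, zero_add]
        exact Finset.sum_congr rfl fun l hl => by
          rw [hpart0 i l (Or.inl ⟨hi, Finset.mem_compl.1 hl⟩), sub_zero]
      rw [hz, hd, sub_zero, mul_comm]
    · rw [if_neg hi, if_neg hi]
      have hz : ∑ l ∈ V j, (A i l - partAdj A V i l) = ∑ l ∈ V j, A i l :=
        Finset.sum_congr rfl fun l hl => by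
          rw [hpart0 i l (Or.inr ⟨hi, hl⟩), sub_zero]
      rw [hz, zero_sub, mul_comm]
      ring
  -- sum of squares
  have hsum : ∑ i, (((lap A - lap (partAdj A V)).mulVec (ubar V j)) i) ^ 2
      = ∑ i ∈ V j, (s * ∑ l ∈ (V j)ᶜ, A i l) ^ 2
        + ∑ i ∈ (V j)ᶜ, (s * ∑ l ∈ V j, A i l) ^ 2 := by
    rw [← Finset.sum_add_sum_compl (V j)]
    congr 1
    · exact Finset.sum_congr rfl fun i hi => by rw [hent i, if_pos hi]
    · exact Finset.sum_congr rfl fun i hi => by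
        rw [hent i, if_neg (Finset.mem_compl.1 hi), neg_pow]
        ring
  -- bound each half
  have hb1 : ∑ i ∈ V j, (s * ∑ l ∈ (V j)ᶜ, A i l) ^ 2 ≤ s ^ 2 * R ^ 2 := by
    have := Finset.sum_sq_le_sq_sum_of_nonneg
      (s := V j) (f := fun i => ∑ l ∈ (V j)ᶜ, A i l)
      (fun i _ => Finset.sum_nonneg fun l _ => hnonneg i l)
    calc ∑ i ∈ V j, (s * ∑ l ∈ (V j)ᶜ, A i l) ^ 2
        = s ^ 2 * ∑ i ∈ V j, (∑ l ∈ (V j)ᶜ, A i l) ^ 2 := by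
          rw [Finset.mul_sum]; exact Finset.sum_congr rfl fun i _ => by ring
      _ ≤ s ^ 2 * R ^ 2 := by
          apply mul_le_mul_of_nonneg_left _ (sq_nonneg s)
          exact this
  have hRT : ∑ i ∈ (V j)ᶜ, ∑ l ∈ V j, A i l = R := by
    rw [hR]; refine Finset.sum_comm.trans ?_
    exact Finset.sum_congr rfl fun l _ => Finset.sum_congr rfl fun i _ => hsymm i l
  have hb2 : ∑ i ∈ (V j)ᶜ, (s * ∑ l ∈ V j, A i l) ^ 2 ≤ s ^ 2 * R ^ 2 := by
    have := Finset.sum_sq_le_sq_sum_of_nonneg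
      (s := (V j)ᶜ) (f := fun i => ∑ l ∈ V j, A i l)
      (fun i _ => Finset.sum_nonneg fun l _ => hnonneg i l)
    rw [hRT] at this
    calc ∑ i ∈ (V j)ᶜ, (s * ∑ l ∈ V j, A i l) ^ 2
        = s ^ 2 * ∑ i ∈ (V j)ᶜ, (∑ l ∈ V j, A i l) ^ 2 := by
          rw [Finset.mul_sum]; exact Finset.sum_congr rfl fun i _ => by ring
      _ ≤ s ^ 2 * R ^ 2 := mul_le_mul_of_nonneg_left this (sq_nonneg s)
  have hle : ∑ i, (((lap A - lap (partAdj A V)).mulVec (ubar V j)) i) ^ 2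
      ≤ 2 * (s * R) ^ 2 := by
    rw [hsum]
    calc _ ≤ s ^ 2 * R ^ 2 + s ^ 2 * R ^ 2 := add_le_add hb1 hb2
      _ = 2 * (s * R) ^ 2 := by ring
  have hrel : relout A V j = s * R := rfl
  rw [ge_iff_le, hrel]
  calc Real.sqrt (∑ i, (((lap A - lap (partAdj A V)).mulVec (ubar V j)) i) ^ 2)
      ≤ Real.sqrt (2 * (s * R) ^ 2) := Real.sqrt_le_sqrt hle
    _ = Real.sqrt 2 * (s * R) := by
        rw [Real.sqrt_mul (by norm_num : (0:ℝ) ≤ 2),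
          Real.sqrt_sq (mul_nonneg hs0 hR0)]
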